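/- arXiv:1809.02662 — 2 statements merged into one kernel-verified Lean document; each statement's English description precedes it below -/
import Mathlib

section
/- Let U ⊂ ℂ be open and let f : U → ℝ be a smooth strictly positive function, and define ρ(z,w) = |z|²/f(w) − 1 on ℂ × U. (i) At every point p = (p_z, p_w) with |p_z|² = f(p_w), the complex Hessian of ρ evaluated at the complex tangent vector (ξ, η) = (∂f/∂w(p_w), p̄_z), namely H_ρ(p; ξ, η) = ∂²ρ/∂z∂z̄(p)|ξ|² + 2Re(∂²ρ/∂z∂w̄(p)·ξ·η̄) + ∂²ρ/∂w∂w̄(p)|η|², equals f(p_w)⁻¹·|∂f/∂w(p_w)|² − ∂²f/∂w∂w̄(p_w). (ii) If |∂f/∂w|² ≥ f·∂²f/∂w∂w̄ everywhere on U, then ρ is plurisubharmonic on ℂ × U. -/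
open Complex Metric Set Real Topology Filter

noncomputable section
open scoped Classical

/-- The signed distance function to the boundary of `Ω`: negative inside, positive outside. -/
def sdist (Ω : Set (ℂ × ℂ)) (p : ℂ × ℂ) : ℝ :=
  if p ∈ Ω then -Metric.infDist p (frontier Ω) else Metric.infDist p (frontier Ω)

/-- Complexification of a real-valued function on `ℂ²`. -/
def cf (f : ℂ × ℂ → ℝ) : ℂ × ℂ → ℂ := fun p => (f p : ℂ)

/-- Wirtinger derivative `∂/∂z` (first coordinate). -/
def wdz (f : ℂ × ℂ → ℂ) (p : ℂ × ℂ) : ℂ :=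
  (fderiv ℝ f p (1, 0) - Complex.I * fderiv ℝ f p (Complex.I, 0)) / 2

/-- Wirtinger derivative `∂/∂z̄` (first coordinate). -/
def wdzbar (f : ℂ × ℂ → ℂ) (p : ℂ × ℂ) : ℂ :=
  (fderiv ℝ f p (1, 0) + Complex.I * fderiv ℝ f p (Complex.I, 0)) / 2

/-- Wirtinger derivative `∂/∂w` (second coordinate). -/
def wdw (f : ℂ × ℂ → ℂ) (p : ℂ × ℂ) : ℂ :=
  (fderiv ℝ f p (0, 1) - Complex.I * fderiv ℝ f p (0, Complex.I)) / 2

/-- Wirtinger derivative `∂/∂w̄` (second coordinate). -/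
def wdwbar (f : ℂ × ℂ → ℂ) (p : ℂ × ℂ) : ℂ :=
  (fderiv ℝ f p (0, 1) + Complex.I * fderiv ℝ f p (0, Complex.I)) / 2

/-- The complex Hessian quadratic form of a real-valued function `f` at `p`
in the direction `(ξ, η)`. -/
def cHess (f : ℂ × ℂ → ℝ) (p : ℂ × ℂ) (ξ η : ℂ) : ℝ :=
  (wdz (wdzbar (cf f)) p * ξ * (starRingEnd ℂ) ξ
    + wdz (wdwbar (cf f)) p * ξ * (starRingEnd ℂ) η
    + wdw (wdzbar (cf f)) p * η * (starRingEnd ℂ) ξ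
    + wdw (wdwbar (cf f)) p * η * (starRingEnd ℂ) η).re

/-- A (C²) function is plurisubharmonic on a set if its complex Hessian is positive
semidefinite at every point of the set. -/
def PshOn (f : ℂ × ℂ → ℝ) (S : Set (ℂ × ℂ)) : Prop :=
  ∀ p ∈ S, ∀ ξ η : ℂ, 0 ≤ cHess f p ξ η

/-- `Ω ⊆ ℂ²` is a Hartogs domain if it is invariant under rotations in the first variable. -/
def IsHartogs (Ω : Set (ℂ × ℂ)) : Prop :=
  ∀ z w : ℂ, ∀ θ : ℝ, (z, w) ∈ Ω → (Complex.exp (θ * Complex.I) * z, w) ∈ Ω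

/-- A global smooth defining function for `Ω`. -/
def IsDefiningFunction (Ω : Set (ℂ × ℂ)) (ρ : ℂ × ℂ → ℝ) : Prop :=
  ContDiff ℝ (⊤ : ℕ∞) ρ ∧ (∀ p, p ∈ Ω ↔ ρ p < 0) ∧ ∀ p ∈ frontier Ω, fderiv ℝ ρ p ≠ 0

/-- `Ω` has smooth boundary if it admits a global smooth defining function. -/
def HasSmoothBoundary (Ω : Set (ℂ × ℂ)) : Prop :=
  ∃ ρ, IsDefiningFunction Ω ρ

/-- `(ξ, η)` is a complex tangent vector to `bΩ` at `p` (with respect to the signed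
distance function). -/
def IsComplexTangent (Ω : Set (ℂ × ℂ)) (p : ℂ × ℂ) (ξ η : ℂ) : Prop :=
  ξ * wdz (cf (sdist Ω)) p + η * wdw (cf (sdist Ω)) p = 0

/-- Levi pseudoconvexity of `Ω`, expressed via the signed distance function. -/
def IsPseudoconvex (Ω : Set (ℂ × ℂ)) : Prop :=
  ∀ p ∈ frontier Ω, ∀ ξ η : ℂ, IsComplexTangent Ω p ξ η → 0 ≤ cHess (sdist Ω) p ξ η

/-- Strict pseudoconvexity at a boundary point. -/
def StrictlyPseudoconvexAt (Ω : Set (ℂ × ℂ)) (p : ℂ × ℂ) : Prop :=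
  ∀ ξ η : ℂ, (ξ, η) ≠ (0, 0) → IsComplexTangent Ω p ξ η → 0 < cHess (sdist Ω) p ξ η

/-- The set of weakly pseudoconvex boundary points. -/
def weakPoints (Ω : Set (ℂ × ℂ)) : Set (ℂ × ℂ) :=
  {p ∈ frontier Ω | ¬ StrictlyPseudoconvexAt Ω p}

/-- `τ` is a Diederich–Fornæss exponent for `Ω`. -/
def IsDFExponent (Ω : Set (ℂ × ℂ)) (τ : ℝ) : Prop :=
  0 < τ ∧ τ < 1 ∧ ∃ ρ, IsDefiningFunction Ω ρ ∧
    PshOn (fun p => -(-ρ p) ^ τ) Ω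

/-- The Diederich–Fornæss index of `Ω`. -/
def DFIndex (Ω : Set (ℂ × ℂ)) : ℝ := sSup {τ | IsDFExponent Ω τ}

/-- A pseudoconvex open set: one admitting a smooth plurisubharmonic exhaustion function. -/
def IsPseudoconvexOpen (D : Set (ℂ × ℂ)) : Prop :=
  IsOpen D ∧ ∃ φ : ℂ × ℂ → ℝ, ContDiffOn ℝ (⊤ : ℕ∞) φ D ∧ PshOn φ D ∧
    ∀ c : ℝ, IsCompact {p ∈ D | φ p ≤ c}

/-- `closure Ω` admits a Stein neighborhood basis. -/
def AdmitsSteinBasis (Ω : Set (ℂ × ℂ)) : Prop :=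
  ∀ U : Set (ℂ × ℂ), IsOpen U → closure Ω ⊆ U →
    ∃ D : Set (ℂ × ℂ), IsPseudoconvexOpen D ∧ closure Ω ⊆ D ∧ D ⊆ U


/-- The Wirtinger derivative `∂/∂w` for functions of one complex variable. -/
def cdw (g : ℂ → ℂ) (w : ℂ) : ℂ :=
  (fderiv ℝ g w 1 - Complex.I * fderiv ℝ g w Complex.I) / 2

/-- The Wirtinger derivative `∂/∂w̄` for functions of one complex variable. -/
def cdwbar (g : ℂ → ℂ) (w : ℂ) : ℂ :=
  (fderiv ℝ g w 1 + Complex.I * fderiv ℝ g w Complex.I) / 2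

/-- Complexification of a real-valued function on `ℂ`. -/
def cf0 (f : ℂ → ℝ) : ℂ → ℂ := fun w => (f w : ℂ)


set_option maxHeartbeats 1000000

private lemma cdw_congr' {h1 h2 : ℂ → ℂ} {w : ℂ} (h : h1 =ᶠ[nhds w] h2) :
    cdw h1 w = cdw h2 w := by simp [cdw, h.fderiv_eq]

private lemma wdz_congr' {h1 h2 : ℂ × ℂ → ℂ} {p : ℂ × ℂ} (h : h1 =ᶠ[nhds p] h2) :
    wdz h1 p = wdz h2 p := by simp [wdz, h.fderiv_eq]

private lemma wdw_congr' {h1 h2 : ℂ × ℂ → ℂ} {p : ℂ × ℂ} (h : h1 =ᶠ[nhds p] h2) :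
    wdw h1 p = wdw h2 p := by simp [wdw, h.fderiv_eq]

private lemma cdw_mul' {A B : ℂ → ℂ} {w : ℂ} (hA : DifferentiableAt ℝ A w)
    (hB : DifferentiableAt ℝ B w) :
    cdw (fun x => A x * B x) w = cdw A w * B w + A w * cdw B w := by
  simp only [cdw, fderiv_fun_mul hA hB, ContinuousLinearMap.add_apply,
    ContinuousLinearMap.smul_apply, smul_eq_mul]
  ring

private lemma cdw_neg' {A : ℂ → ℂ} {w : ℂ} :
    cdw (fun x => -(A x)) w = -cdw A w := by
  simp only [cdw, fderiv_fun_neg, ContinuousLinearMap.neg_apply]; ring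

/-- from the proof of Lemma 3.2 of Abdulsahib–Harrington: the Levi form
of `ρ(z,w) = |z|²/f(w) − 1` on the complex tangent direction, and the plurisubharmonicity
criterion `|f_w|² ≥ f f_{ww̄}`. -/
theorem stmt_15 (U : Set ℂ) (hU : IsOpen U) (f : ℂ → ℝ)
    (hf : ContDiffOn ℝ (⊤ : ℕ∞) f U) (hfpos : ∀ w ∈ U, 0 < f w) :
    (∀ p : ℂ × ℂ, p.2 ∈ U → Complex.normSq p.1 = f p.2 →
      cHess (fun q => Complex.normSq q.1 / f q.2 - 1) p
          (cdw (cf0 f) p.2) ((starRingEnd ℂ) p.1) =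
        (f p.2)⁻¹ * Complex.normSq (cdw (cf0 f) p.2) - (cdw (cdwbar (cf0 f)) p.2).re) ∧
    ((∀ w ∈ U, f w * (cdw (cdwbar (cf0 f)) w).re ≤ Complex.normSq (cdw (cf0 f) w)) →
      PshOn (fun q => Complex.normSq q.1 / f q.2 - 1) (Set.univ ×ˢ U)) := by
  classical
  have hfd : ∀ w ∈ U, DifferentiableAt ℝ f w := fun w hw =>
    (hf.contDiffAt (hU.mem_nhds hw)).differentiableAt (by simp)
  have hFc : ∀ w ∈ U, ContDiffAt ℝ (⊤:ℕ∞) (cf0 f) w := fun w hw =>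
    Complex.ofRealCLM.contDiff.contDiffAt.comp w (hf.contDiffAt (hU.mem_nhds hw))
  have hFd : ∀ w ∈ U, DifferentiableAt ℝ (cf0 f) w := fun w hw =>
    Complex.ofRealCLM.differentiable.differentiableAt.comp w (hfd w hw)
  have hne : ∀ w ∈ U, cf0 f w ≠ 0 := by
    intro w hw
    simp only [cf0, ne_eq, Complex.ofReal_eq_zero]
    exact (hfpos w hw).ne'
  have hFderiv : ∀ w ∈ U, ∀ u, fderiv ℝ (cf0 f) w u = ((fderiv ℝ f w u : ℝ) : ℂ) := by
    intro w hw u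
    have he : cf0 f = ⇑Complex.ofRealCLM ∘ f := rfl
    rw [he, (Complex.ofRealCLM.hasFDerivAt.comp w (hfd w hw).hasFDerivAt).fderiv]
    simp
  have hconj : ∀ w ∈ U, cdwbar (cf0 f) w = (starRingEnd ℂ) (cdw (cf0 f) w) := by
    intro w hw
    simp only [cdw, cdwbar, hFderiv w hw, map_div₀, map_sub, map_mul, map_ofNat,
      Complex.conj_ofReal, Complex.conj_I]
    ring
  set g : ℂ → ℂ := fun x => (cf0 f x)⁻¹ with hg_def
  have hgkey : ∀ w ∈ U, DifferentiableAt ℝ g w ∧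
      ∀ u, fderiv ℝ g w u = -((cf0 f w)^2)⁻¹ * fderiv ℝ (cf0 f) w u := by
    intro w hw
    have h1 : HasFDerivAt (fun x : ℂ => x⁻¹)
        (((ContinuousLinearMap.smulRight (1 : ℂ →L[ℂ] ℂ) (-((cf0 f w)^2)⁻¹))).restrictScalars ℝ)
        (cf0 f w) := ((hasDerivAt_inv (hne w hw)).hasFDerivAt).restrictScalars ℝ
    have h2 : HasFDerivAt g
        ((((ContinuousLinearMap.smulRight (1 : ℂ →L[ℂ] ℂ) (-((cf0 f w)^2)⁻¹))).restrictScalars ℝ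
          |>.comp (fderiv ℝ (cf0 f) w)) : ℂ →L[ℝ] ℂ) w := h1.comp w (hFd w hw).hasFDerivAt
    refine ⟨h2.differentiableAt, fun u => ?_⟩
    rw [h2.fderiv]
    simp [smul_eq_mul]
    ring
  have hgdiff : ∀ w ∈ U, DifferentiableAt ℝ g w := fun w hw => (hgkey w hw).1
  have hcdwg : ∀ w ∈ U, cdw g w = -((cf0 f w)^2)⁻¹ * cdw (cf0 f) w := by
    intro w hw
    simp only [cdw, (hgkey w hw).2]
    ring
  have hcdwbarg : ∀ w ∈ U, cdwbar g w = -((cf0 f w)^2)⁻¹ * cdwbar (cf0 f) w := by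
    intro w hw
    simp only [cdwbar, (hgkey w hw).2]
    ring
  have hbFdiff : ∀ w ∈ U, DifferentiableAt ℝ (cdwbar (cf0 f)) w := by
    intro w hw
    have h1 : DifferentiableAt ℝ (fderiv ℝ (cf0 f)) w :=
      ((hFc w hw).fderiv_right (m := (⊤:ℕ∞)) (le_of_eq (by norm_cast))).differentiableAt
        (by simp)
    show DifferentiableAt ℝ
      (fun w' => (fderiv ℝ (cf0 f) w' 1 + Complex.I * fderiv ℝ (cf0 f) w' Complex.I) / 2) w
    have h2 : DifferentiableAt ℝ (fun w' => fderiv ℝ (cf0 f) w' 1) w :=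
      h1.clm_apply (differentiableAt_const (1:ℂ))
    have h3 : DifferentiableAt ℝ (fun w' => fderiv ℝ (cf0 f) w' Complex.I) w :=
      h1.clm_apply (differentiableAt_const Complex.I)
    simp only [div_eq_mul_inv]
    exact (h2.add (h3.const_mul Complex.I)).mul_const _
  have hev : ∀ w ∈ U, cdwbar g =ᶠ[nhds w]
      fun x => -(g x * g x) * cdwbar (cf0 f) x := by
    intro w hw
    filter_upwards [hU.mem_nhds hw] with x hx
    rw [hcdwbarg x hx]
    have : -(g x * g x) = -((cf0 f x)^2)⁻¹ := by
      simp only [hg_def]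
      rw [sq, mul_inv]
    rw [this]
  have hbgdiff : ∀ w ∈ U, DifferentiableAt ℝ (cdwbar g) w := by
    intro w hw
    refine (Filter.EventuallyEq.differentiableAt_iff (hev w hw)).mpr ?_
    exact (((hgdiff w hw).mul (hgdiff w hw)).neg).mul (hbFdiff w hw)
  have h2g : ∀ w ∈ U, cdw (cdwbar g) w =
      2 * ((cf0 f w)^3)⁻¹ * (cdw (cf0 f) w * cdwbar (cf0 f) w)
        - ((cf0 f w)^2)⁻¹ * cdw (cdwbar (cf0 f)) w := by
    intro w hw
    rw [cdw_congr' (hev w hw),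
      cdw_mul' (((hgdiff w hw).fun_mul (hgdiff w hw)).fun_neg) (hbFdiff w hw),
      cdw_neg' (A := fun x => g x * g x), cdw_mul' (hgdiff w hw) (hgdiff w hw),
      hcdwg w hw]
    have hgw : g w = (cf0 f w)⁻¹ := rfl
    rw [hgw]
    field_simp
    ring
  -- the complexified function
  have hrho : cf (fun q : ℂ × ℂ => Complex.normSq q.1 / f q.2 - 1)
      = fun q => q.1 * (starRingEnd ℂ) q.1 * g q.2 - 1 := by
    funext q
    simp only [cf, hg_def, cf0]
    push_cast
    rw [Complex.mul_conj, div_eq_mul_inv]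
  have hfder : ∀ q : ℂ × ℂ, q.2 ∈ U → ∀ v u : ℂ,
      fderiv ℝ (cf (fun q : ℂ × ℂ => Complex.normSq q.1 / f q.2 - 1)) q (v, u)
        = (v * (starRingEnd ℂ) q.1 + q.1 * (starRingEnd ℂ) v) * g q.2
          + q.1 * (starRingEnd ℂ) q.1 * fderiv ℝ g q.2 u := by
    intro q hq v u
    rw [hrho]
    have hz1 : HasFDerivAt (fun q : ℂ × ℂ => q.1) (ContinuousLinearMap.fst ℝ ℂ ℂ) q :=
      hasFDerivAt_fst
    have hz2 : HasFDerivAt (fun q : ℂ × ℂ => (starRingEnd ℂ) q.1)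
        (Complex.conjCLE.toContinuousLinearMap.comp (ContinuousLinearMap.fst ℝ ℂ ℂ)) q :=
      Complex.conjCLE.toContinuousLinearMap.hasFDerivAt.comp q hz1
    have hz3 : HasFDerivAt (fun q : ℂ × ℂ => g q.2)
        ((fderiv ℝ g q.2).comp (ContinuousLinearMap.snd ℝ ℂ ℂ)) q :=
      (hgdiff q.2 hq).hasFDerivAt.comp q hasFDerivAt_snd
    have H := ((hz1.fun_mul hz2).fun_mul hz3).sub_const 1
    rw [H.fderiv]
    simp [smul_eq_mul]
    ring
  have hI : (Complex.I : ℂ)^2 = -1 := Complex.I_sq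
  have hwdzbar : ∀ q : ℂ × ℂ, q.2 ∈ U →
      wdzbar (cf (fun q : ℂ × ℂ => Complex.normSq q.1 / f q.2 - 1)) q = q.1 * g q.2 := by
    intro q hq
    simp only [wdzbar]
    rw [hfder q hq 1 0, hfder q hq Complex.I 0]
    simp only [map_zero, mul_zero, add_zero, map_one, one_mul, Complex.conj_I]
    linear_combination (((starRingEnd ℂ) q.1 - q.1) * g q.2 / 2) * hI
  have hwdwbar : ∀ q : ℂ × ℂ, q.2 ∈ U →
      wdwbar (cf (fun q : ℂ × ℂ => Complex.normSq q.1 / f q.2 - 1)) q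
        = q.1 * (starRingEnd ℂ) q.1 * cdwbar g q.2 := by
    intro q hq
    simp only [wdwbar, cdwbar]
    rw [hfder q hq 0 1, hfder q hq 0 Complex.I]
    simp only [map_zero, zero_mul, mul_zero, zero_add, add_zero]
    ring
  -- the master formula for the complex Hessian
  have master : ∀ p : ℂ × ℂ, p.2 ∈ U → ∀ ξ η : ℂ,
      cHess (fun q : ℂ × ℂ => Complex.normSq q.1 / f q.2 - 1) p ξ η =
        (f p.2)⁻¹ * Complex.normSq ξ
        - ((f p.2)^2)⁻¹ * (2 * ((starRingEnd ℂ) p.1 * (starRingEnd ℂ) (cdw (cf0 f) p.2)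
            * ξ * (starRingEnd ℂ) η).re)
        + 2 * ((f p.2)^3)⁻¹ * Complex.normSq (cdw (cf0 f) p.2) * Complex.normSq p.1
            * Complex.normSq η
        - Complex.normSq p.1 * Complex.normSq η * ((f p.2)^2)⁻¹
            * (cdw (cdwbar (cf0 f)) p.2).re := by
    intro p hp ξ η
    have hmem : (Set.univ ×ˢ U : Set (ℂ × ℂ)) ∈ nhds p :=
      (isOpen_univ.prod hU).mem_nhds ⟨trivial, hp⟩
    have hevz : wdzbar (cf (fun q : ℂ × ℂ => Complex.normSq q.1 / f q.2 - 1))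
        =ᶠ[nhds p] fun q => q.1 * g q.2 := by
      filter_upwards [hmem] with q hq
      exact hwdzbar q hq.2
    have hevw : wdwbar (cf (fun q : ℂ × ℂ => Complex.normSq q.1 / f q.2 - 1))
        =ᶠ[nhds p] fun q => q.1 * (starRingEnd ℂ) q.1 * cdwbar g q.2 := by
      filter_upwards [hmem] with q hq
      exact hwdwbar q hq.2
    have hz1 : HasFDerivAt (fun q : ℂ × ℂ => q.1) (ContinuousLinearMap.fst ℝ ℂ ℂ) p :=
      hasFDerivAt_fst
    have hz2 : HasFDerivAt (fun q : ℂ × ℂ => (starRingEnd ℂ) q.1)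
        (Complex.conjCLE.toContinuousLinearMap.comp (ContinuousLinearMap.fst ℝ ℂ ℂ)) p :=
      Complex.conjCLE.toContinuousLinearMap.hasFDerivAt.comp p hz1
    have hz3 : HasFDerivAt (fun q : ℂ × ℂ => g q.2)
        ((fderiv ℝ g p.2).comp (ContinuousLinearMap.snd ℝ ℂ ℂ)) p :=
      (hgdiff p.2 hp).hasFDerivAt.comp p hasFDerivAt_snd
    have hz4 : HasFDerivAt (fun q : ℂ × ℂ => cdwbar g q.2)
        ((fderiv ℝ (cdwbar g) p.2).comp (ContinuousLinearMap.snd ℝ ℂ ℂ)) p :=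
      (hbgdiff p.2 hp).hasFDerivAt.comp p hasFDerivAt_snd
    have hP : ∀ v u : ℂ, fderiv ℝ (fun q : ℂ × ℂ => q.1 * g q.2) p (v, u)
        = v * g p.2 + p.1 * fderiv ℝ g p.2 u := by
      intro v u
      rw [(hz1.fun_mul hz3).fderiv]
      simp [smul_eq_mul]
      ring
    have hQ : ∀ v u : ℂ, fderiv ℝ
        (fun q : ℂ × ℂ => q.1 * (starRingEnd ℂ) q.1 * cdwbar g q.2) p (v, u)
        = (v * (starRingEnd ℂ) p.1 + p.1 * (starRingEnd ℂ) v) * cdwbar g p.2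
          + p.1 * (starRingEnd ℂ) p.1 * fderiv ℝ (cdwbar g) p.2 u := by
      intro v u
      rw [((hz1.fun_mul hz2).fun_mul hz4).fderiv]
      simp [smul_eq_mul]
      ring
    have e1 : wdz (wdzbar (cf (fun q : ℂ × ℂ => Complex.normSq q.1 / f q.2 - 1))) p
        = g p.2 := by
      rw [wdz_congr' hevz]
      simp only [wdz]
      rw [hP 1 0, hP Complex.I 0]
      simp only [map_zero, mul_zero, add_zero, one_mul]
      linear_combination (-(g p.2) / 2) * hI
    have e2 : wdw (wdzbar (cf (fun q : ℂ × ℂ => Complex.normSq q.1 / f q.2 - 1))) p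
        = p.1 * cdw g p.2 := by
      rw [wdw_congr' hevz]
      simp only [wdw, cdw]
      rw [hP 0 1, hP 0 Complex.I]
      ring
    have e3 : wdz (wdwbar (cf (fun q : ℂ × ℂ => Complex.normSq q.1 / f q.2 - 1))) p
        = (starRingEnd ℂ) p.1 * cdwbar g p.2 := by
      rw [wdz_congr' hevw]
      simp only [wdz]
      rw [hQ 1 0, hQ Complex.I 0]
      simp only [map_zero, mul_zero, add_zero, map_one, one_mul, Complex.conj_I]
      linear_combination ((p.1 - (starRingEnd ℂ) p.1) * cdwbar g p.2 / 2) * hI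
    have e4 : wdw (wdwbar (cf (fun q : ℂ × ℂ => Complex.normSq q.1 / f q.2 - 1))) p
        = p.1 * (starRingEnd ℂ) p.1 * cdw (cdwbar g) p.2 := by
      rw [wdw_congr' hevw]
      simp only [wdw, cdw]
      rw [hQ 0 1, hQ 0 Complex.I]
      simp only [map_zero, zero_mul, mul_zero, zero_add, add_zero]
      ring
    simp only [cHess]
    rw [e1, e2, e3, e4, hcdwg p.2 hp, hcdwbarg p.2 hp, h2g p.2 hp, hconj p.2 hp]
    have hcf : cf0 f p.2 = ((f p.2 : ℝ) : ℂ) := rfl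
    have hgp : g p.2 = (((f p.2 : ℝ) : ℂ))⁻¹ := rfl
    rw [hgp, hcf]
    have hr0 : ((f p.2 : ℝ) : ℂ) ≠ 0 := by
      simpa [cf0] using hne p.2 hp
    have hkey : (((f p.2 : ℝ) : ℂ))⁻¹ * ξ * (starRingEnd ℂ) ξ
        + (starRingEnd ℂ) p.1 * (-((((f p.2 : ℝ) : ℂ))^2)⁻¹
            * (starRingEnd ℂ) (cdw (cf0 f) p.2)) * ξ * (starRingEnd ℂ) η
        + p.1 * (-((((f p.2 : ℝ) : ℂ))^2)⁻¹ * cdw (cf0 f) p.2) * η * (starRingEnd ℂ) ξ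
        + p.1 * (starRingEnd ℂ) p.1
            * (2 * ((((f p.2 : ℝ) : ℂ))^3)⁻¹ * (cdw (cf0 f) p.2
                * (starRingEnd ℂ) (cdw (cf0 f) p.2))
              - ((((f p.2 : ℝ) : ℂ))^2)⁻¹ * cdw (cdwbar (cf0 f)) p.2)
            * η * (starRingEnd ℂ) η
      = (((f p.2)⁻¹ * Complex.normSq ξ
          - ((f p.2)^2)⁻¹ * (2 * ((starRingEnd ℂ) p.1 * (starRingEnd ℂ) (cdw (cf0 f) p.2)
              * ξ * (starRingEnd ℂ) η).re)
          + 2 * ((f p.2)^3)⁻¹ * Complex.normSq (cdw (cf0 f) p.2) * Complex.normSq p.1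
              * Complex.normSq η : ℝ) : ℂ)
        - ((Complex.normSq p.1 * Complex.normSq η * ((f p.2)^2)⁻¹ : ℝ) : ℂ)
            * cdw (cdwbar (cf0 f)) p.2 := by
      push_cast
      rw [Complex.re_eq_add_conj]
      simp only [map_mul, Complex.conj_conj]
      simp only [← Complex.mul_conj]
      field_simp [hr0]
      ring
    rw [hkey]
    simp only [Complex.sub_re, Complex.ofReal_re, Complex.re_ofReal_mul]
  constructor
  · -- part (i)
    intro p hp hnsq
    rw [master p hp (cdw (cf0 f) p.2) ((starRingEnd ℂ) p.1)]
    have h1 : Complex.normSq ((starRingEnd ℂ) p.1) = Complex.normSq p.1 :=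
      Complex.normSq_conj p.1
    have h2 : ((starRingEnd ℂ) p.1 * (starRingEnd ℂ) (cdw (cf0 f) p.2) * cdw (cf0 f) p.2
        * (starRingEnd ℂ) ((starRingEnd ℂ) p.1)).re
        = Complex.normSq p.1 * Complex.normSq (cdw (cf0 f) p.2) := by
      have : (starRingEnd ℂ) p.1 * (starRingEnd ℂ) (cdw (cf0 f) p.2) * cdw (cf0 f) p.2
          * (starRingEnd ℂ) ((starRingEnd ℂ) p.1)
          = ((Complex.normSq p.1 * Complex.normSq (cdw (cf0 f) p.2) : ℝ) : ℂ) := by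
        rw [Complex.conj_conj]
        push_cast
        simp only [← Complex.mul_conj]
        ring
      rw [this, Complex.ofReal_re]
    rw [h1, h2, hnsq]
    have hr : (0:ℝ) < f p.2 := hfpos p.2 hp
    field_simp
    ring
  · -- part (ii)
    intro hcond p hp ξ η
    have hp2 : p.2 ∈ U := hp.2
    rw [master p hp2 ξ η]
    set r := f p.2 with hr_def
    set z := p.1 with hz_def
    set a := cdw (cf0 f) p.2 with ha_def
    set b := cdw (cdwbar (cf0 f)) p.2 with hb_def
    have hr : (0:ℝ) < r := hfpos p.2 hp2
    set c := ((starRingEnd ℂ) z * (starRingEnd ℂ) a * ξ * (starRingEnd ℂ) η).re with hc_def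
    have key0 : 0 ≤ Complex.normSq ((r : ℂ) * (starRingEnd ℂ) ξ
        - (starRingEnd ℂ) z * (starRingEnd ℂ) a * (starRingEnd ℂ) η) :=
      Complex.normSq_nonneg _
    have keyexp : Complex.normSq ((r : ℂ) * (starRingEnd ℂ) ξ
        - (starRingEnd ℂ) z * (starRingEnd ℂ) a * (starRingEnd ℂ) η)
        = r^2 * Complex.normSq ξ - 2*r*c
          + Complex.normSq z * Complex.normSq a * Complex.normSq η := by
      rw [Complex.normSq_sub]
      have h1 : Complex.normSq ((r : ℂ) * (starRingEnd ℂ) ξ) = r^2 * Complex.normSq ξ := by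
        rw [Complex.normSq_mul, Complex.normSq_conj, Complex.normSq_ofReal]
        ring
      have h2 : Complex.normSq ((starRingEnd ℂ) z * (starRingEnd ℂ) a * (starRingEnd ℂ) η)
          = Complex.normSq z * Complex.normSq a * Complex.normSq η := by
        rw [Complex.normSq_mul, Complex.normSq_mul, Complex.normSq_conj,
          Complex.normSq_conj, Complex.normSq_conj]
      have h3 : ((r : ℂ) * (starRingEnd ℂ) ξ
          * (starRingEnd ℂ) ((starRingEnd ℂ) z * (starRingEnd ℂ) a * (starRingEnd ℂ) η)).re
          = r * c := by
        have he : (r : ℂ) * (starRingEnd ℂ) ξ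
            * (starRingEnd ℂ) ((starRingEnd ℂ) z * (starRingEnd ℂ) a * (starRingEnd ℂ) η)
            = (r : ℂ) * (starRingEnd ℂ)
                ((starRingEnd ℂ) z * (starRingEnd ℂ) a * ξ * (starRingEnd ℂ) η) := by
          simp only [map_mul, Complex.conj_conj]
          ring
        rw [he, Complex.re_ofReal_mul, Complex.conj_re, hc_def]
      rw [h1, h2, h3]
      ring
    have hineq : 0 ≤ r^2 * Complex.normSq ξ - 2*r*c
        + Complex.normSq z * Complex.normSq a * Complex.normSq η := by
      rw [← keyexp]; exact key0
    have hb2 : r * b.re ≤ Complex.normSq a := hcond p.2 hp2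
    have hprod : 0 ≤ Complex.normSq z * Complex.normSq η * (Complex.normSq a - r * b.re) :=
      mul_nonneg (mul_nonneg (Complex.normSq_nonneg _) (Complex.normSq_nonneg _))
        (by linarith)
    have h3 : 0 ≤ r^2 * Complex.normSq ξ - 2*r*c
        + 2 * Complex.normSq a * Complex.normSq z * Complex.normSq η
        - Complex.normSq z * Complex.normSq η * (r * b.re) := by linarith
    have heq : r⁻¹ * Complex.normSq ξ - (r^2)⁻¹ * (2 * c)
        + 2 * (r^3)⁻¹ * Complex.normSq a * Complex.normSq z * Complex.normSq η
        - Complex.normSq z * Complex.normSq η * (r^2)⁻¹ * b.re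
        = (r^3)⁻¹ * (r^2 * Complex.normSq ξ - 2*r*c
          + 2 * Complex.normSq a * Complex.normSq z * Complex.normSq η
          - Complex.normSq z * Complex.normSq η * (r * b.re)) := by
      field_simp
    rw [heq]
    exact mul_nonneg (by positivity) h3


end
end

section
/- Let 0 < τ < 1, C > 0, and 0 < A ≤ B be real numbers satisfying (2τC/(1−τ))·log(B/A) < π. Then there exist φ ∈ ℝ and ε > 0 such that the function g(t) = sin((2τC/(1−τ))·log t + φ) − ε satisfies g(t) > 0 and −(1/4)·τ·(1−τ)²·(g'(t) + t·g''(t)) − (C²/t)·τ³·g(t) ≥ ε·τ³·C²/t for all t ∈ [A, B]. -/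
open Set Real

lemma stmt16_d1 (k φ ε t : ℝ) (ht : t ≠ 0) :
    HasDerivAt (fun s => Real.sin (k * Real.log s + φ) - ε)
      (Real.cos (k * Real.log t + φ) * (k * t⁻¹)) t :=
  ((((Real.hasDerivAt_log ht).const_mul k).add_const φ).sin).sub_const ε

lemma stmt16_d2 (k φ ε t : ℝ) (ht : t ≠ 0) :
    deriv (deriv (fun s => Real.sin (k * Real.log s + φ) - ε)) t =
      -Real.sin (k * Real.log t + φ) * (k * t⁻¹) * (k * t⁻¹)
        + Real.cos (k * Real.log t + φ) * (k * -(t ^ 2)⁻¹) := by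
  have heq : deriv (fun s => Real.sin (k * Real.log s + φ) - ε) =ᶠ[nhds t]
      fun s => Real.cos (k * Real.log s + φ) * (k * s⁻¹) := by
    filter_upwards [isOpen_compl_singleton.mem_nhds ht] with s hs
    exact (stmt16_d1 k φ ε s hs).deriv
  rw [heq.deriv_eq]
  have h1 : HasDerivAt (fun s => Real.cos (k * Real.log s + φ))
      (-Real.sin (k * Real.log t + φ) * (k * t⁻¹)) t :=
    (((Real.hasDerivAt_log ht).const_mul k).add_const φ).cos
  have h2 : HasDerivAt (fun s : ℝ => k * s⁻¹) (k * -(t ^ 2)⁻¹) t :=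
    (hasDerivAt_inv ht).const_mul k
  exact (h1.mul h2).deriv

/-- from the proof of Theorem 1.5 of Abdulsahib–Harrington: the explicit
positive solution `g(t) = sin((2τC/(1-τ))·log t + φ) − ε` of the key differential
inequality on `[A, B]`. -/
theorem stmt_16 (τ C A B : ℝ) (hτ0 : 0 < τ) (hτ1 : τ < 1) (hC : 0 < C) (hA : 0 < A)
    (hAB : A ≤ B) (h : 2 * τ * C / (1 - τ) * Real.log (B / A) < π) :
    ∃ φ ε : ℝ, 0 < ε ∧ ∀ t ∈ Set.Icc A B,
      0 < Real.sin (2 * τ * C / (1 - τ) * Real.log t + φ) - ε ∧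
      ε * τ ^ 3 * C ^ 2 / t ≤
        -(1 / 4) * τ * (1 - τ) ^ 2 *
            (deriv (fun s => Real.sin (2 * τ * C / (1 - τ) * Real.log s + φ) - ε) t +
              t * deriv (deriv
                (fun s => Real.sin (2 * τ * C / (1 - τ) * Real.log s + φ) - ε)) t) -
          C ^ 2 / t * τ ^ 3 * (Real.sin (2 * τ * C / (1 - τ) * Real.log t + φ) - ε) := by
  set k := 2 * τ * C / (1 - τ) with hk
  have hτ' : (0:ℝ) < 1 - τ := by linarith
  have hk0 : 0 < k := div_pos (by positivity) hτ'
  set L := k * Real.log (B / A) with hL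
  have hBA : 1 ≤ B / A := (one_le_div hA).2 hAB
  have hlogBA : 0 ≤ Real.log (B / A) := Real.log_nonneg hBA
  have hL0 : 0 ≤ L := mul_nonneg hk0.le hlogBA
  have hLπ : L < π := h
  have hcos : 0 < Real.cos (L / 2) :=
    Real.cos_pos_of_mem_Ioo ⟨by linarith [Real.pi_pos], by linarith⟩
  set ε := Real.cos (L / 2) / 2 with hε
  have hε0 : 0 < ε := half_pos hcos
  set φ := π / 2 - k * (Real.log A + Real.log B) / 2 with hφ
  refine ⟨φ, ε, hε0, ?_⟩
  rintro t ⟨htA, htB⟩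
  have ht0 : 0 < t := lt_of_lt_of_le hA htA
  have ht : t ≠ 0 := ne_of_gt ht0
  have hlogdiv : Real.log (B / A) = Real.log B - Real.log A :=
    Real.log_div (ne_of_gt (lt_of_lt_of_le hA hAB)) (ne_of_gt hA)
  -- positivity of sin - ε
  have hsin : Real.cos (L / 2) ≤ Real.sin (k * Real.log t + φ) := by
    have hxa : |π / 2 - (k * Real.log t + φ)| ≤ L / 2 := by
      rw [abs_le]
      have h1 : Real.log A ≤ Real.log t := Real.log_le_log hA htA
      have h2 : Real.log t ≤ Real.log B := Real.log_le_log ht0 htB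
      constructor
      · rw [hφ]
        have := mul_le_mul_of_nonneg_left h2 hk0.le
        rw [hL, hlogdiv]; nlinarith
      · rw [hφ]
        have := mul_le_mul_of_nonneg_left h1 hk0.le
        rw [hL, hlogdiv]; nlinarith
    calc Real.cos (L / 2) ≤ Real.cos |π / 2 - (k * Real.log t + φ)| := by
          apply Real.cos_le_cos_of_nonneg_of_le_pi (abs_nonneg _) (by linarith) hxa
      _ = Real.cos (π / 2 - (k * Real.log t + φ)) := Real.cos_abs _
      _ = Real.sin (k * Real.log t + φ) := Real.cos_pi_div_two_sub _
  have hpos : 0 < Real.sin (k * Real.log t + φ) - ε := by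
    rw [hε]; linarith
  refine ⟨hpos, ?_⟩
  refine le_of_eq ?_
  rw [(stmt16_d1 k φ ε t ht).deriv, stmt16_d2 k φ ε t ht]
  have h1τ : (1 : ℝ) - τ ≠ 0 := ne_of_gt hτ'
  rw [hk]
  field_simp
  ring
end
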